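/- If a tree of maximum degree at most 4 has at least five leaves, then it admits no greedy rectilinear drawing: in any rectilinear (axis-parallel, planar, bend-free) drawing of the tree, there exist two leaves u and v such that u lies in the cell of v or v lies in the cell of u; consequently the drawing is not greedy. -/

import Mathlib

open Function

noncomputable section

abbrev Plane := EuclideanSpace ℝ (Fin 2)

def IsGreedy {V : Type*} (G : SimpleGraph V) (p : V → Plane) : Prop :=
  ∀ u v : V, u ≠ v → ∃ (n : ℕ) (c : Fin (n + 1) → V), c 0 = u ∧ c (Fin.last n) = v ∧
    (∀ i : Fin n, G.Adj (c i.castSucc) (c i.succ)) ∧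
    (∀ i : Fin n, dist (p (c i.succ)) (p v) < dist (p (c i.castSucc)) (p v))

def cell {V : Type*} (G : SimpleGraph V) (p : V → Plane) (v : V) : Set Plane :=
  {q | ∀ w : V, G.Adj v w → dist q (p v) < dist q (p w)}

/-- Every edge is drawn as a horizontal or vertical segment. -/
def AxisParallel {V : Type*} (G : SimpleGraph V) (p : V → Plane) : Prop :=
  ∀ u v : V, G.Adj u v → p u 0 = p v 0 ∨ p u 1 = p v 1

/-- Distinct edges intersect only at common endpoints (planarity of the drawing). -/
def NonCrossing {V : Type*} (G : SimpleGraph V) (p : V → Plane) : Prop :=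
  ∀ a b c d : V, G.Adj a b → G.Adj c d →
    ∀ q : Plane, q ∈ segment ℝ (p a) (p b) → q ∈ segment ℝ (p c) (p d) →
      ((a = c ∧ b = d) ∨ (a = d ∧ b = c)) ∨
        ∃ x : V, (x = a ∨ x = b) ∧ (x = c ∨ x = d) ∧ q = p x

lemma key_sq (a b c d : ℝ) (hiff : c < a ↔ d < b) (hca : c ≠ a) (hdb : d ≠ b) :
    (a - b)^2 < (a - d)^2 ∨ (b - a)^2 < (b - c)^2 := by
  rcases lt_or_gt_of_ne hca with h1 | h1
  · have h2 : d < b := hiff.mp h1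
    rcases le_total b a with h | h
    · left; nlinarith
    · right; nlinarith
  · have hnd : ¬ d < b := fun h => absurd (hiff.mpr h) (not_lt_of_gt h1)
    have h2 : b < d := lt_of_le_of_ne (not_lt.mp hnd) hdb.symm
    rcases le_total b a with h | h
    · right; nlinarith
    · left; nlinarith

lemma dist_lt_of_sq (q r s : Plane)
    (h : (q 0 - r 0)^2 + (q 1 - r 1)^2 < (q 0 - s 0)^2 + (q 1 - s 1)^2) :
    dist q r < dist q s := by
  rw [EuclideanSpace.dist_eq, EuclideanSpace.dist_eq]
  apply Real.sqrt_lt_sqrt (by positivity)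
  simpa [Fin.sum_univ_two, Real.dist_eq, sq_abs] using h

lemma not_greedy_of_cell {V : Type*} (G : SimpleGraph V) (p : V → Plane) {u v : V}
    (huv : u ≠ v) (h : p u ∈ cell G p v) : ¬ IsGreedy G p := by
  intro hg
  obtain ⟨n, c, hc0, hcl, hadj, hdist⟩ := hg v u huv.symm
  cases n with
  | zero =>
      exact huv (by rw [← hcl, show Fin.last 0 = 0 from rfl, hc0])
  | succ m =>
      have hv0 : c (Fin.castSucc 0) = v := by rw [Fin.castSucc_zero]; exact hc0
      have hadj0 : G.Adj v (c (Fin.succ 0)) := hv0 ▸ hadj 0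
      have h1 : dist (p u) (p v) < dist (p u) (p (c (Fin.succ 0))) := h _ hadj0
      have h2 := hdist 0
      rw [hv0] at h2
      rw [dist_comm (p (c (Fin.succ 0))) (p u), dist_comm (p v) (p u)] at h2
      linarith

theorem tree_five_leaves_not_greedy {V : Type*} [Fintype V] [DecidableEq V]
    (G : SimpleGraph V) [DecidableRel G.Adj]
    (hT : G.IsTree) (hdeg : ∀ v : V, G.degree v ≤ 4)
    (hleaves : 5 ≤ (Finset.univ.filter fun v : V => G.degree v = 1).card)
    (p : V → Plane) (hp : Injective p)
    (haxis : AxisParallel G p) (hplanar : NonCrossing G p) :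
    (∃ u v : V, G.degree u = 1 ∧ G.degree v = 1 ∧ u ≠ v ∧
        (p u ∈ cell G p v ∨ p v ∈ cell G p u)) ∧
      ¬ IsGreedy G p := by
  classical
  have hex : ∀ x : V, G.degree x = 1 → ∃ w, G.Adj x w ∧ ∀ y, G.Adj x y → y = w := by
    intro x hx
    obtain ⟨a, ha⟩ := Finset.card_eq_one.mp hx
    refine ⟨a, ?_, ?_⟩
    · rw [← SimpleGraph.mem_neighborFinset, ha]; exact Finset.mem_singleton_self a
    · intro y hy
      have : y ∈ G.neighborFinset x := (SimpleGraph.mem_neighborFinset G x y).mpr hy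
      rw [ha] at this
      exact Finset.mem_singleton.mp this
  choose nb hnb1 hnb2 using hex
  -- orientation map
  have hcard : (Finset.univ : Finset (Fin 2 × Bool)).card <
      (Finset.univ.filter fun v : V => G.degree v = 1).card := by
    have h4 : (Finset.univ : Finset (Fin 2 × Bool)).card = 4 := by decide
    omega
  obtain ⟨u, hu, v, hv, huv, ho⟩ :=
    Finset.exists_ne_map_eq_of_card_lt_of_maps_to hcard
      (f := fun x => if hx : G.degree x = 1 then
        (if p x 0 = p (nb x hx) 0 then ((0 : Fin 2), decide (p (nb x hx) 1 < p x 1))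
          else (1, decide (p (nb x hx) 0 < p x 0))) else (0, true))
      (fun a _ => Finset.mem_univ _)
  rw [Finset.mem_filter] at hu hv
  have hdu := hu.2
  have hdv := hv.2
  have hadju := hnb1 u hdu
  have hadjv := hnb1 v hdv
  simp only [dif_pos hdu, dif_pos hdv] at ho
  have hneq : ∀ (x : V) (hx : G.degree x = 1),
      ¬ (p x 0 = p (nb x hx) 0 ∧ p x 1 = p (nb x hx) 1) := by
    rintro x hx ⟨h0, h1⟩
    apply G.ne_of_adj (hnb1 x hx)
    apply hp
    ext i
    fin_cases i
    · exact h0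
    · exact h1
  have main : p u ∈ cell G p v ∨ p v ∈ cell G p u := by
    by_cases hcu : p u 0 = p (nb u hdu) 0 <;> by_cases hcv : p v 0 = p (nb v hdv) 0
    · rw [if_pos hcu, if_pos hcv, Prod.mk.injEq] at ho
      have hb : (p (nb u hdu) 1 < p u 1) ↔ (p (nb v hdv) 1 < p v 1) :=
        decide_eq_decide.mp ho.2
      have h1 : p (nb u hdu) 1 ≠ p u 1 := fun h => hneq u hdu ⟨hcu, h.symm⟩
      have h2 : p (nb v hdv) 1 ≠ p v 1 := fun h => hneq v hdv ⟨hcv, h.symm⟩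
      rcases key_sq (p u 1) (p v 1) (p (nb u hdu) 1) (p (nb v hdv) 1) hb h1 h2 with hk | hk
      · left
        intro w hw
        rw [hnb2 v hdv w hw]
        apply dist_lt_of_sq
        rw [← hcv]
        linarith
      · right
        intro w hw
        rw [hnb2 u hdu w hw]
        apply dist_lt_of_sq
        rw [← hcu]
        linarith
    · rw [if_pos hcu, if_neg hcv, Prod.mk.injEq] at ho
      exact absurd ho.1 (by decide)
    · rw [if_neg hcu, if_pos hcv, Prod.mk.injEq] at ho
      exact absurd ho.1 (by decide)
    · have hcu' : p u 1 = p (nb u hdu) 1 := (haxis u _ hadju).resolve_left hcu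
      have hcv' : p v 1 = p (nb v hdv) 1 := (haxis v _ hadjv).resolve_left hcv
      rw [if_neg hcu, if_neg hcv, Prod.mk.injEq] at ho
      have hb : (p (nb u hdu) 0 < p u 0) ↔ (p (nb v hdv) 0 < p v 0) :=
        decide_eq_decide.mp ho.2
      have h1 : p (nb u hdu) 0 ≠ p u 0 := fun h => hcu h.symm
      have h2 : p (nb v hdv) 0 ≠ p v 0 := fun h => hcv h.symm
      rcases key_sq (p u 0) (p v 0) (p (nb u hdu) 0) (p (nb v hdv) 0) hb h1 h2 with hk | hk
      · left
        intro w hw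
        rw [hnb2 v hdv w hw]
        apply dist_lt_of_sq
        rw [← hcv']
        linarith
      · right
        intro w hw
        rw [hnb2 u hdu w hw]
        apply dist_lt_of_sq
        rw [← hcu']
        linarith
  refine ⟨⟨u, v, hdu, hdv, huv, main⟩, ?_⟩
  rcases main with h | h
  · exact not_greedy_of_cell G p huv h
  · exact not_greedy_of_cell G p huv.symm h
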